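/- arXiv:2309.11043 — 3 statements merged into one kernel-verified Lean document; each statement's English description precedes it below -/
import Mathlib

section
/- Let μ be a σ-finite measure on a measurable space X, and let p, q : X → ℝ≥0 be measurable functions with ∫ p dμ = 1 and ∫ q dμ = 1. Then ∫ q²/(p + q) dμ = 1/2 if and only if p = q μ-almost everywhere (with the integrand interpreted as 0 where p + q = 0). -/
open scoped NNReal ENNReal
open MeasureTheory

private lemma real_le_aux (a c : ℝ) (ha : 0 ≤ a) (hc : 0 ≤ c) (hb : 0 < c + a) :
    a ≤ a ^ 2 / (c + a) + (c + a) / 4 := by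
  rw [div_add_div _ _ (ne_of_gt hb) (by norm_num : (4:ℝ) ≠ 0),
    le_div_iff₀ (by positivity)]
  nlinarith [sq_nonneg (c - a)]

private lemma real_eq_aux (a c : ℝ) (ha : 0 ≤ a) (hc : 0 ≤ c) (hb : 0 < c + a)
    (h : a = a ^ 2 / (c + a) + (c + a) / 4) : c = a := by
  field_simp at h
  nlinarith [sq_nonneg (c - a)]

private lemma pointwise_le (a c : ℝ≥0) :
    (a : ℝ≥0∞) ≤ (a : ℝ≥0∞) ^ 2 / ((c : ℝ≥0∞) + a) + ((c : ℝ≥0∞) + a) / 4 := by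
  by_cases hb : c + a = 0
  · have ha : a = 0 := (add_eq_zero.mp hb).2
    simp [ha]
  · have hb' : (0:ℝ) < (c : ℝ) + a := by
      have : (0:ℝ≥0) < c + a := pos_iff_ne_zero.mpr hb
      exact_mod_cast this
    have h4 : ((4 : ℝ≥0) : ℝ≥0∞) = 4 := by norm_num
    rw [← ENNReal.coe_pow, ← ENNReal.coe_add, ← h4,
      ← ENNReal.coe_div hb, ← ENNReal.coe_div (by norm_num : (4:ℝ≥0) ≠ 0),
      ← ENNReal.coe_add, ENNReal.coe_le_coe, ← NNReal.coe_le_coe]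
    push_cast
    exact real_le_aux a c a.coe_nonneg c.coe_nonneg hb'

private lemma pointwise_eq (a c : ℝ≥0)
    (h : (a : ℝ≥0∞) = (a : ℝ≥0∞) ^ 2 / ((c : ℝ≥0∞) + a) + ((c : ℝ≥0∞) + a) / 4) :
    c = a := by
  by_cases hb : c + a = 0
  · have ha : a = 0 := (add_eq_zero.mp hb).2
    have hc : c = 0 := (add_eq_zero.mp hb).1
    rw [ha, hc]
  · have hb' : (0:ℝ) < (c : ℝ) + a := by
      have : (0:ℝ≥0) < c + a := pos_iff_ne_zero.mpr hb
      exact_mod_cast this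
    have h4 : ((4 : ℝ≥0) : ℝ≥0∞) = 4 := by norm_num
    rw [← ENNReal.coe_pow, ← ENNReal.coe_add, ← h4,
      ← ENNReal.coe_div hb, ← ENNReal.coe_div (by norm_num : (4:ℝ≥0) ≠ 0),
      ← ENNReal.coe_add, ENNReal.coe_inj, ← NNReal.coe_inj] at h
    push_cast at h
    have := real_eq_aux a c a.coe_nonneg c.coe_nonneg hb' h
    exact_mod_cast this

theorem density_ratio_eq_iff
    {X : Type*} [MeasurableSpace X] (μ : Measure X) [SigmaFinite μ]
    (p q : X → ℝ≥0) (hp : Measurable p) (hq : Measurable q)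
    (hp1 : ∫⁻ x, (p x : ℝ≥0∞) ∂μ = 1) (hq1 : ∫⁻ x, (q x : ℝ≥0∞) ∂μ = 1) :
    ∫⁻ x, (q x : ℝ≥0∞) ^ 2 / ((p x : ℝ≥0∞) + (q x : ℝ≥0∞)) ∂μ = 1 / 2 ↔
      p =ᵐ[μ] q := by
  have hg : Measurable fun x => (q x : ℝ≥0∞) ^ 2 / ((p x : ℝ≥0∞) + (q x : ℝ≥0∞)) :=
    ((hq.coe_nnreal_ennreal.pow_const 2).div
      (hp.coe_nnreal_ennreal.add hq.coe_nnreal_ennreal))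
  have hs : Measurable fun x => ((p x : ℝ≥0∞) + (q x : ℝ≥0∞)) / 4 :=
    (hp.coe_nnreal_ennreal.add hq.coe_nnreal_ennreal).div_const 4
  have hsum : ∫⁻ x, ((p x : ℝ≥0∞) + (q x : ℝ≥0∞)) / 4 ∂μ = 1 / 2 := by
    simp_rw [ENNReal.div_eq_inv_mul]
    rw [lintegral_const_mul _ (f := fun x => (p x : ℝ≥0∞) + (q x : ℝ≥0∞)) (hp.coe_nnreal_ennreal.add hq.coe_nnreal_ennreal),
      lintegral_add_left hp.coe_nnreal_ennreal, hp1, hq1, one_add_one_eq_two,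
      show (4:ℝ≥0∞) = 2*2 by norm_num, ENNReal.mul_inv (by norm_num) (by norm_num),
      mul_assoc, ENNReal.inv_mul_cancel two_ne_zero ENNReal.ofNat_ne_top, mul_one]
  constructor
  · intro h
    have hFint : ∫⁻ x, ((q x : ℝ≥0∞) ^ 2 / ((p x : ℝ≥0∞) + (q x : ℝ≥0∞))
        + ((p x : ℝ≥0∞) + (q x : ℝ≥0∞)) / 4) ∂μ = 1 := by
      rw [lintegral_add_left hg, h, hsum]
      rw [ENNReal.div_add_div_same, one_add_one_eq_two, ENNReal.div_self two_ne_zero ENNReal.ofNat_ne_top]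
    have hle : ∀ᵐ x ∂μ, (q x : ℝ≥0∞) ≤ (q x : ℝ≥0∞) ^ 2 / ((p x : ℝ≥0∞) + (q x : ℝ≥0∞))
        + ((p x : ℝ≥0∞) + (q x : ℝ≥0∞)) / 4 :=
      Filter.Eventually.of_forall fun x => pointwise_le (q x) (p x)
    have heq : (fun x => (q x : ℝ≥0∞)) =ᵐ[μ]
        (fun x => (q x : ℝ≥0∞) ^ 2 / ((p x : ℝ≥0∞) + (q x : ℝ≥0∞))
          + ((p x : ℝ≥0∞) + (q x : ℝ≥0∞)) / 4) := by
      refine ae_eq_of_ae_le_of_lintegral_le hle (by rw [hq1]; exact ENNReal.one_ne_top)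
        (hg.add hs).aemeasurable ?_
      rw [hFint, hq1]
    filter_upwards [heq] with x hx
    exact pointwise_eq (q x) (p x) hx
  · intro h
    have : (fun x => (q x : ℝ≥0∞) ^ 2 / ((p x : ℝ≥0∞) + (q x : ℝ≥0∞))) =ᵐ[μ]
        (fun x => (q x : ℝ≥0∞) / 2) := by
      filter_upwards [h] with x hx
      rw [hx]
      by_cases h0 : q x = 0
      · simp [h0]
      · have h0' : (q x : ℝ≥0∞) ≠ 0 := by exact_mod_cast h0
        rw [sq, ← two_mul, mul_comm (2 : ℝ≥0∞),
          ENNReal.mul_div_mul_left _ _ h0' ENNReal.coe_ne_top]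
    rw [lintegral_congr_ae this]
    simp_rw [ENNReal.div_eq_inv_mul]
    rw [lintegral_const_mul _ hq.coe_nnreal_ennreal, hq1]
end

section
/- Let μ be a σ-finite measure on a measurable space X, let p, q : X → ℝ≥0 be measurable with ∫ p dμ = 1 and ∫ q dμ = 1, and let ε₃, ε₄ be independent standard Gaussian random variables on ℝ. Define l_G(q) = E[(ε₃ − ε₄)²] · ∫ q³/(p + q)² dμ (integrand interpreted as 0 where p + q = 0). Then l_G(q) ≥ 1/2 for all such q, and l_G(q) = 1/2 if and only if q = p μ-almost everywhere. -/
open scoped NNReal ENNReal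
open MeasureTheory ProbabilityTheory Real

section GaussianAux

lemma aux_pdf01 (x : ℝ) :
    gaussianPDFReal 0 1 x = (Real.sqrt (2 * π))⁻¹ * Real.exp (-(2:ℝ)⁻¹ * x ^ 2) := by
  simp only [gaussianPDFReal]
  push_cast
  ring_nf

lemma aux_gint (g : ℝ → ℝ) :
    ∫ x, g x ∂(gaussianReal 0 1) = ∫ x, gaussianPDFReal 0 1 x * g x := by
  rw [gaussianReal_of_var_ne_zero 0 one_ne_zero]
  have : gaussianPDF 0 1 = fun x => ((gaussianPDFReal 0 1 x).toNNReal : ℝ≥0∞) := rfl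
  rw [this, integral_withDensity_eq_integral_smul
    ((measurable_gaussianPDFReal 0 1).real_toNNReal) g]
  congr 1; ext x
  rw [NNReal.smul_def, smul_eq_mul, Real.coe_toNNReal _ (gaussianPDFReal_nonneg 0 1 x)]

lemma aux_sqrt2pi_pos : 0 < Real.sqrt (2 * π) := Real.sqrt_pos.mpr (by positivity)

lemma aux_sq_exp_integrable : Integrable (fun x : ℝ => x ^ 2 * Real.exp (-(2:ℝ)⁻¹ * x ^ 2)) := by
  have h := integrable_rpow_mul_exp_neg_mul_sq (by norm_num : (0:ℝ) < 2⁻¹) (s := 2) (by norm_num)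
  convert h using 2 with x
  rw [Real.rpow_two]

lemma aux_sq_exp_integral :
    ∫ x : ℝ, x ^ 2 * Real.exp (-(2:ℝ)⁻¹ * x ^ 2) = Real.sqrt (2 * π) := by
  set f : ℝ → ℝ := fun x => x ^ 2 * Real.exp (-(2:ℝ)⁻¹ * x ^ 2) with hf
  have heven : ∀ x, f (-x) = f x := by intro x; simp [hf]
  have hsplit : ∫ x, f x = (∫ x in Set.Iic (0:ℝ), f x) + ∫ x in Set.Ioi (0:ℝ), f x := by
    rw [← setIntegral_union (Set.Iic_disjoint_Ioi le_rfl) measurableSet_Ioi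
      aux_sq_exp_integrable.integrableOn aux_sq_exp_integrable.integrableOn,
      Set.Iic_union_Ioi, setIntegral_univ]
  have hneg : ∫ x in Set.Iic (0:ℝ), f x = ∫ x in Set.Ioi (0:ℝ), f x := by
    have := integral_comp_neg_Ioi (c := (0:ℝ)) f
    simp only [heven, neg_zero] at this
    exact this.symm
  have hIoi : ∫ x in Set.Ioi (0:ℝ), f x = Real.sqrt (2 * π) / 2 := by
    have h := integral_rpow_mul_exp_neg_mul_rpow (p := 2) (q := 2) (b := 2⁻¹)
      (by norm_num) (by norm_num) (by norm_num)
    have hcongr : ∫ x in Set.Ioi (0:ℝ), f x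
        = ∫ x in Set.Ioi (0:ℝ), x ^ (2:ℝ) * Real.exp (-(2:ℝ)⁻¹ * x ^ (2:ℝ)) := by
      refine setIntegral_congr_fun measurableSet_Ioi (fun x hx => ?_)
      rw [Real.rpow_two]
    rw [hcongr, h]
    have h32 : Real.Gamma ((2 + 1) / 2) = Real.sqrt π / 2 := by
      rw [show ((2:ℝ) + 1) / 2 = 1/2 + 1 by norm_num, Real.Gamma_add_one (by norm_num),
        Real.Gamma_one_half_eq]
      ring
    rw [h32, show (-((2:ℝ) + 1) / 2) = (-(3/2) : ℝ) by norm_num,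
      Real.rpow_neg (by norm_num), Real.inv_rpow (by norm_num), inv_inv,
      show ((2:ℝ)) ^ (3/2 : ℝ) = 2 * Real.sqrt 2 by
        rw [show (3/2 : ℝ) = 1 + 1/2 by norm_num, Real.rpow_add (by norm_num), Real.rpow_one,
          ← Real.sqrt_eq_rpow],
      show Real.sqrt (2 * π) = Real.sqrt 2 * Real.sqrt π by rw [Real.sqrt_mul (by norm_num)]]
    ring
  rw [hsplit, hneg, hIoi]; ring

lemma aux_gmoment2 : ∫ x, x ^ 2 ∂(gaussianReal 0 1) = 1 := by
  rw [aux_gint]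
  have : ∀ x : ℝ, gaussianPDFReal 0 1 x * x ^ 2
      = (Real.sqrt (2 * π))⁻¹ * (x ^ 2 * Real.exp (-(2:ℝ)⁻¹ * x ^ 2)) := by
    intro x; rw [aux_pdf01]; ring
  simp_rw [this]
  rw [integral_const_mul, aux_sq_exp_integral, inv_mul_cancel₀ aux_sqrt2pi_pos.ne']

lemma aux_gintegrable2 : Integrable (fun x : ℝ => x ^ 2) (gaussianReal 0 1) := by
  rw [gaussianReal_of_var_ne_zero 0 one_ne_zero]
  rw [integrable_withDensity_iff (measurable_gaussianPDF 0 1)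
    (Filter.Eventually.of_forall fun x => ENNReal.ofReal_lt_top)]
  have : ∀ x : ℝ, x ^ 2 * (gaussianPDF 0 1 x).toReal
      = (Real.sqrt (2 * π))⁻¹ * (x ^ 2 * Real.exp (-(2:ℝ)⁻¹ * x ^ 2)) := by
    intro x
    rw [gaussianPDF, ENNReal.toReal_ofReal (gaussianPDFReal_nonneg 0 1 x), aux_pdf01]; ring
  simp_rw [this]
  exact aux_sq_exp_integrable.const_mul _

lemma aux_gintegrable1 : Integrable (fun x : ℝ => x) (gaussianReal 0 1) := by
  rw [gaussianReal_of_var_ne_zero 0 one_ne_zero]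
  rw [integrable_withDensity_iff (measurable_gaussianPDF 0 1)
    (Filter.Eventually.of_forall fun x => ENNReal.ofReal_lt_top)]
  have : ∀ x : ℝ, x * (gaussianPDF 0 1 x).toReal
      = (Real.sqrt (2 * π))⁻¹ * (x * Real.exp (-(2:ℝ)⁻¹ * x ^ 2)) := by
    intro x
    rw [gaussianPDF, ENNReal.toReal_ofReal (gaussianPDFReal_nonneg 0 1 x), aux_pdf01]; ring
  simp_rw [this]
  exact (integrable_mul_exp_neg_mul_sq (by norm_num : (0:ℝ) < 2⁻¹)).const_mul _

lemma aux_gmoment1 : ∫ x, x ∂(gaussianReal 0 1) = 0 := by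
  rw [aux_gint]
  have hodd : ∀ x : ℝ, gaussianPDFReal 0 1 (-x) * (-x) = -(gaussianPDFReal 0 1 x * x) := by
    intro x
    rw [aux_pdf01, aux_pdf01]
    ring_nf
  have h := integral_neg_eq_self (fun x : ℝ => gaussianPDFReal 0 1 x * x) volume
  simp only [hodd, integral_neg] at h
  linarith

end GaussianAux

section RealAux

lemma aux_real_key {a b : ℝ} (ha : 0 ≤ a) (hb : 0 ≤ b) :
    a / 2 ≤ a ^ 3 / (b + a) ^ 2 + b / 4 := by
  rcases eq_or_lt_of_le (by linarith : (0:ℝ) ≤ b + a) with h | h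
  · have ha0 : a = 0 := by linarith
    have hb0 : b = 0 := by linarith
    simp [ha0, hb0]
  · have hid : a ^ 3 / (b + a) ^ 2
        = a / 2 - b / 4 + (a - b) ^ 2 * (2 * a + b) / (4 * (b + a) ^ 2) := by
      field_simp
      ring
    have hpos : 0 ≤ (a - b) ^ 2 * (2 * a + b) / (4 * (b + a) ^ 2) := by positivity
    linarith

lemma aux_real_eq {a b : ℝ} (ha : 0 ≤ a) (hb : 0 ≤ b)
    (heq : a / 2 = a ^ 3 / (b + a) ^ 2 + b / 4) : a = b := by
  rcases eq_or_lt_of_le (by linarith : (0:ℝ) ≤ b + a) with h | h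
  · linarith
  · have hid : a ^ 3 / (b + a) ^ 2
        = a / 2 - b / 4 + (a - b) ^ 2 * (2 * a + b) / (4 * (b + a) ^ 2) := by
      field_simp
      ring
    have hz : (a - b) ^ 2 * (2 * a + b) / (4 * (b + a) ^ 2) = 0 := by linarith
    have h4 : (0:ℝ) < 4 * (b + a) ^ 2 := by positivity
    have hz' : (a - b) ^ 2 * (2 * a + b) = 0 := by
      field_simp at hz
      linarith
    rcases mul_eq_zero.mp hz' with h1 | h2
    · have := pow_eq_zero_iff (n := 2) (by norm_num) |>.mp h1
      linarith
    · nlinarith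

end RealAux

theorem generator_loss_global_min
    {X : Type*} [MeasurableSpace X] (μ : Measure X) [SigmaFinite μ]
    (p q : X → ℝ≥0) (hp : Measurable p) (hq : Measurable q)
    (hp1 : ∫⁻ x, (p x : ℝ≥0∞) ∂μ = 1) (hq1 : ∫⁻ x, (q x : ℝ≥0∞) ∂μ = 1)
    {Ω : Type*} [MeasurableSpace Ω] (ν : Measure Ω) [IsProbabilityMeasure ν]
    (ε₃ ε₄ : Ω → ℝ) (hm₃ : Measurable ε₃) (hm₄ : Measurable ε₄)
    (h₃ : Measure.map ε₃ ν = gaussianReal 0 1)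
    (h₄ : Measure.map ε₄ ν = gaussianReal 0 1)
    (hindep : IndepFun ε₃ ε₄ ν) :
    (∫ ω, (ε₃ ω - ε₄ ω) ^ 2 ∂ν) *
        (∫⁻ x, (q x : ℝ≥0∞) ^ 3 / ((p x : ℝ≥0∞) + (q x : ℝ≥0∞)) ^ 2 ∂μ).toReal
      ≥ 1 / 2 ∧
    ((∫ ω, (ε₃ ω - ε₄ ω) ^ 2 ∂ν) *
        (∫⁻ x, (q x : ℝ≥0∞) ^ 3 / ((p x : ℝ≥0∞) + (q x : ℝ≥0∞)) ^ 2 ∂μ).toReal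
      = 1 / 2 ↔ q =ᵐ[μ] p) := by
  -- Step 1: the Gaussian factor equals 2
  have i2₃ : Integrable (fun ω => ε₃ ω ^ 2) ν := by
    have h : Integrable (fun x : ℝ => x ^ 2) (Measure.map ε₃ ν) := by
      rw [h₃]; exact aux_gintegrable2
    exact (integrable_map_measure (by fun_prop) hm₃.aemeasurable).mp h
  have i2₄ : Integrable (fun ω => ε₄ ω ^ 2) ν := by
    have h : Integrable (fun x : ℝ => x ^ 2) (Measure.map ε₄ ν) := by
      rw [h₄]; exact aux_gintegrable2
    exact (integrable_map_measure (by fun_prop) hm₄.aemeasurable).mp h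
  have i1₃ : Integrable ε₃ ν := by
    have h : Integrable (fun x : ℝ => x) (Measure.map ε₃ ν) := by
      rw [h₃]; exact aux_gintegrable1
    exact (integrable_map_measure aestronglyMeasurable_id hm₃.aemeasurable).mp h
  have i1₄ : Integrable ε₄ ν := by
    have h : Integrable (fun x : ℝ => x) (Measure.map ε₄ ν) := by
      rw [h₄]; exact aux_gintegrable1
    exact (integrable_map_measure aestronglyMeasurable_id hm₄.aemeasurable).mp h
  have e2₃ : ∫ ω, ε₃ ω ^ 2 ∂ν = 1 := by
    have h := integral_map (μ := ν) (f := fun x : ℝ => x ^ 2) hm₃.aemeasurable (by fun_prop)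
    rw [h₃, aux_gmoment2] at h
    exact h.symm
  have e2₄ : ∫ ω, ε₄ ω ^ 2 ∂ν = 1 := by
    have h := integral_map (μ := ν) (f := fun x : ℝ => x ^ 2) hm₄.aemeasurable (by fun_prop)
    rw [h₄, aux_gmoment2] at h
    exact h.symm
  have e1₃ : ∫ ω, ε₃ ω ∂ν = 0 := by
    have h := integral_map (μ := ν) (f := fun x : ℝ => x) hm₃.aemeasurable aestronglyMeasurable_id
    rw [h₃, aux_gmoment1] at h
    exact h.symm
  have e1₄ : ∫ ω, ε₄ ω ∂ν = 0 := by
    have h := integral_map (μ := ν) (f := fun x : ℝ => x) hm₄.aemeasurable aestronglyMeasurable_id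
    rw [h₄, aux_gmoment1] at h
    exact h.symm
  have imul : Integrable (fun ω => ε₃ ω * ε₄ ω) ν := hindep.integrable_mul i1₃ i1₄
  have ecross : ∫ ω, ε₃ ω * ε₄ ω ∂ν = 0 := by
    have h := hindep.integral_mul_eq_mul_integral i1₃.aestronglyMeasurable i1₄.aestronglyMeasurable
    calc ∫ ω, ε₃ ω * ε₄ ω ∂ν = integral ν (ε₃ * ε₄) := by rfl
    _ = (∫ ω, ε₃ ω ∂ν) * ∫ ω, ε₄ ω ∂ν := h
    _ = 0 := by rw [e1₃, e1₄]; ring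
  have hgauss : ∫ ω, (ε₃ ω - ε₄ ω) ^ 2 ∂ν = 2 := by
    have expand : (fun ω => (ε₃ ω - ε₄ ω) ^ 2)
        = fun ω => ε₃ ω ^ 2 - 2 * (ε₃ ω * ε₄ ω) + ε₄ ω ^ 2 := by
      funext ω; ring
    have ia : Integrable (fun ω => ε₃ ω ^ 2 - 2 * (ε₃ ω * ε₄ ω)) ν :=
      i2₃.sub (imul.const_mul 2)
    have ib : Integrable (fun ω => 2 * (ε₃ ω * ε₄ ω)) ν := imul.const_mul 2
    rw [expand, integral_add ia i2₄, integral_sub i2₃ ib, integral_const_mul, e2₃, e2₄, ecross]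
    ring
  -- Step 2: the lintegral part
  set I : ℝ≥0∞ := ∫⁻ x, (q x : ℝ≥0∞) ^ 3 / ((p x : ℝ≥0∞) + (q x : ℝ≥0∞)) ^ 2 ∂μ with hI
  set F : X → ℝ≥0∞ := fun x => (q x : ℝ≥0∞) ^ 3 / ((p x : ℝ≥0∞) + (q x : ℝ≥0∞)) ^ 2 with hF
  have hFmeas : Measurable F := by
    apply Measurable.div
    · fun_prop
    · fun_prop
  have hF_le : ∀ x, F x ≤ (q x : ℝ≥0∞) := by
    intro x
    apply ENNReal.div_le_of_le_mul
    calc (q x : ℝ≥0∞) ^ 3 = (q x : ℝ≥0∞) * ((q x : ℝ≥0∞) * (q x : ℝ≥0∞)) := by ring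
    _ ≤ (q x : ℝ≥0∞) * (((p x : ℝ≥0∞) + (q x : ℝ≥0∞)) * ((p x : ℝ≥0∞) + (q x : ℝ≥0∞))) := by
        gcongr <;> exact le_add_self
    _ = (q x : ℝ≥0∞) * ((p x : ℝ≥0∞) + (q x : ℝ≥0∞)) ^ 2 := by ring
  have hI_le_one : I ≤ 1 := by
    rw [hI, ← hq1]
    exact lintegral_mono hF_le
  have hI_ne_top : I ≠ ∞ := (lt_of_le_of_lt hI_le_one (by norm_num)).ne
  -- pointwise identification with NNReal values
  have hFcoe : ∀ x, F x = ((q x ^ 3 / (p x + q x) ^ 2 : ℝ≥0) : ℝ≥0∞) := by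
    intro x
    rcases eq_or_ne (p x + q x) 0 with h0 | h0
    · have hq0 : q x = 0 := by
        have := add_eq_zero.mp h0
        exact this.2
      simp [hF, hq0, h0]
    · rw [ENNReal.coe_div (by positivity), ENNReal.coe_pow, ENNReal.coe_pow, ENNReal.coe_add]
  -- pointwise key inequality in ℝ≥0∞
  have hkey : ∀ x, (q x : ℝ≥0∞) * 2⁻¹ ≤ F x + (p x : ℝ≥0∞) * 4⁻¹ := by
    intro x
    rw [hFcoe x]
    have hreal := aux_real_key (q x).coe_nonneg (p x).coe_nonneg
    have hnn : (q x * 2⁻¹ : ℝ≥0) ≤ q x ^ 3 / (p x + q x) ^ 2 + p x * 4⁻¹ := by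
      rw [← NNReal.coe_le_coe]
      push_cast
      calc ((q x : ℝ) * 2⁻¹) = (q x : ℝ) / 2 := by ring
      _ ≤ (q x : ℝ) ^ 3 / ((p x : ℝ) + (q x : ℝ)) ^ 2 + (p x : ℝ) / 4 := hreal
      _ = (q x : ℝ) ^ 3 / ((p x : ℝ) + (q x : ℝ)) ^ 2 + (p x : ℝ) * 4⁻¹ := by ring
    calc (q x : ℝ≥0∞) * 2⁻¹ = ((q x * 2⁻¹ : ℝ≥0) : ℝ≥0∞) := by
          rw [ENNReal.coe_mul]; norm_num
    _ ≤ ((q x ^ 3 / (p x + q x) ^ 2 + p x * 4⁻¹ : ℝ≥0) : ℝ≥0∞) := ENNReal.coe_le_coe.mpr hnn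
    _ = ((q x ^ 3 / (p x + q x) ^ 2 : ℝ≥0) : ℝ≥0∞) + (p x : ℝ≥0∞) * 4⁻¹ := by
          rw [ENNReal.coe_add, ENNReal.coe_mul]; norm_num
  -- integral computations
  have hlhs : ∫⁻ x, (q x : ℝ≥0∞) * 2⁻¹ ∂μ = 2⁻¹ := by
    rw [lintegral_mul_const _ (by fun_prop), hq1, one_mul]
  have hrhs : ∫⁻ x, (F x + (p x : ℝ≥0∞) * 4⁻¹) ∂μ = I + 4⁻¹ := by
    rw [lintegral_add_left hFmeas, lintegral_mul_const _ (by fun_prop), hp1, one_mul, hI]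
  have hmain : 2⁻¹ ≤ I + 4⁻¹ := by
    rw [← hlhs, ← hrhs]
    exact lintegral_mono hkey
  have h24 : (2⁻¹ : ℝ≥0∞) = 4⁻¹ + 4⁻¹ := by
    rw [← two_mul, show (4:ℝ≥0∞) = 2 * 2 by norm_num,
      ENNReal.mul_inv (Or.inl two_ne_zero) (Or.inl (by norm_num)), ← mul_assoc,
      ENNReal.mul_inv_cancel two_ne_zero (by norm_num), one_mul]
  have hI_ge : (4⁻¹ : ℝ≥0∞) ≤ I := by
    rw [h24] at hmain
    exact (WithTop.add_le_add_iff_right (by norm_num : (4⁻¹ : ℝ≥0∞) ≠ ⊤)).mp hmain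
  have h4toReal : ((4⁻¹ : ℝ≥0∞)).toReal = 1/4 := by
    rw [ENNReal.toReal_inv]
    norm_num
  have htoReal_ge : (1/4 : ℝ) ≤ I.toReal := by
    have := ENNReal.toReal_mono hI_ne_top hI_ge
    rwa [h4toReal] at this
  constructor
  · rw [hgauss]
    rw [ge_iff_le]
    linarith
  constructor
  · -- equality implies q = p a.e.
    intro heq
    rw [hgauss] at heq
    have hItr : I.toReal = 1/4 := by linarith
    have hIeq : I = 4⁻¹ := by
      refine (ENNReal.toReal_eq_toReal_iff' hI_ne_top (by norm_num)).mp ?_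
      rw [hItr, h4toReal]
    -- the two lintegrals agree, so the pointwise inequality is an a.e. equality
    have hGmeas : Measurable fun x => (q x : ℝ≥0∞) * 2⁻¹ := by fun_prop
    have hBmeas : Measurable fun x => F x + (p x : ℝ≥0∞) * 4⁻¹ :=
      hFmeas.add (by fun_prop)
    have hsub := lintegral_sub hGmeas (by rw [hlhs]; norm_num)
      (Filter.Eventually.of_forall hkey)
    rw [hlhs, hrhs, hIeq, ← h24, tsub_self] at hsub
    have hzero := (lintegral_eq_zero_iff (hBmeas.sub hGmeas)).mp hsub
    have hae : ∀ᵐ x ∂μ, (q x : ℝ≥0∞) * 2⁻¹ = F x + (p x : ℝ≥0∞) * 4⁻¹ := by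
      filter_upwards [hzero] with x hx
      simp only [Pi.zero_apply] at hx
      exact le_antisymm (hkey x) (tsub_eq_zero_iff_le.mp hx)
    filter_upwards [hae] with x hx
    rw [hFcoe x] at hx
    have hx' : ((q x * 2⁻¹ : ℝ≥0) : ℝ≥0∞)
        = ((q x ^ 3 / (p x + q x) ^ 2 + p x * 4⁻¹ : ℝ≥0) : ℝ≥0∞) := by
      rw [ENNReal.coe_mul, ENNReal.coe_add, ENNReal.coe_mul]
      convert hx using 3 <;> norm_num
    have hnn := ENNReal.coe_inj.mp hx'
    have hreal : (q x : ℝ) / 2 = (q x : ℝ) ^ 3 / ((p x : ℝ) + (q x : ℝ)) ^ 2 + (p x : ℝ) / 4 := by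
      have := congrArg (fun t : ℝ≥0 => (t : ℝ)) hnn
      push_cast at this
      calc (q x : ℝ) / 2 = (q x : ℝ) * 2⁻¹ := by ring
      _ = (q x : ℝ) ^ 3 / ((p x : ℝ) + (q x : ℝ)) ^ 2 + (p x : ℝ) * 4⁻¹ := this
      _ = (q x : ℝ) ^ 3 / ((p x : ℝ) + (q x : ℝ)) ^ 2 + (p x : ℝ) / 4 := by ring
    have := aux_real_eq (q x).coe_nonneg (p x).coe_nonneg hreal
    exact NNReal.coe_injective this
  · -- q = p a.e. implies equality
    intro hqp
    have hFeq : F =ᵐ[μ] fun x => (p x : ℝ≥0∞) * 4⁻¹ := by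
      filter_upwards [hqp] with x hx
      rw [hFcoe x, hx]
      have hnn : p x ^ 3 / (p x + p x) ^ 2 = p x * 4⁻¹ := by
        rcases eq_or_ne (p x) 0 with h0 | h0
        · simp [h0]
        · have hpos : (0:ℝ) < (p x : ℝ) := lt_of_le_of_ne (p x).coe_nonneg (by
            simpa [eq_comm] using fun h => h0 (NNReal.coe_injective (by simp [← h])))
          refine NNReal.coe_injective ?_
          push_cast
          field_simp
          ring
      rw [hnn, ENNReal.coe_mul]
      norm_num
    have hIeq : I = 4⁻¹ := by
      rw [hI, lintegral_congr_ae hFeq, lintegral_mul_const _ (by fun_prop), hp1, one_mul]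
    rw [hgauss, hIeq, h4toReal]
    norm_num
end

section
/- Let μ be a σ-finite measure on a measurable space X, and let p, q : X → ℝ≥0 be measurable with ∫ p dμ = 1 and ∫ q dμ = 1. Then (∫ q²/(p + q) dμ)² ≥ 1/4, and combining with the Jensen step, ∫ q · (q/(p + q))² dμ ≥ 1/4 (all ratios interpreted as 0 where p + q = 0). -/
open scoped NNReal ENNReal
open MeasureTheory

private lemma real_key {a b : ℝ} (hs : 0 < a + b) :
    b ≤ b ^ 2 / (a + b) + (a + b) / 4 := by
  rw [div_add_div _ _ hs.ne' (by norm_num : (4:ℝ) ≠ 0), le_div_iff₀ (by positivity)]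
  nlinarith [sq_nonneg (2 * b - (a + b))]

private lemma nnreal_key (a b : ℝ≥0) : b ≤ b ^ 2 / (a + b) + (a + b) / 4 := by
  rcases eq_or_ne (a + b) 0 with h | h
  · have hb : b = 0 := (add_eq_zero.mp h).2
    simp [hb]
  · have hs : (0:ℝ) < (a:ℝ) + b := by
      have : (0:ℝ≥0) < a + b := pos_iff_ne_zero.mpr h
      exact_mod_cast this
    rw [← NNReal.coe_le_coe]
    push_cast
    exact real_key hs

private lemma half_mul_half (a : ℝ≥0∞) : a ^ (1/2:ℝ) * a ^ (1/2:ℝ) = a := by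
  rw [← ENNReal.rpow_add_of_nonneg _ _ (by norm_num) (by norm_num)]; norm_num

theorem chained_lower_bound
    {X : Type*} [MeasurableSpace X] (μ : Measure X) [SigmaFinite μ]
    (p q : X → ℝ≥0) (hp : Measurable p) (hq : Measurable q)
    (hp1 : ∫⁻ x, (p x : ℝ≥0∞) ∂μ = 1) (hq1 : ∫⁻ x, (q x : ℝ≥0∞) ∂μ = 1) :
    ((∫⁻ x, (q x : ℝ≥0∞) ^ 2 / ((p x : ℝ≥0∞) + (q x : ℝ≥0∞)) ∂μ) ^ 2 ≥ 1 / 4) ∧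
    (∫⁻ x, (q x : ℝ≥0∞) * ((q x : ℝ≥0∞) / ((p x : ℝ≥0∞) + (q x : ℝ≥0∞))) ^ 2 ∂μ
      ≥ 1 / 4) := by
  have mp : Measurable fun x => (p x : ℝ≥0∞) := hp.coe_nnreal_ennreal
  have mq : Measurable fun x => (q x : ℝ≥0∞) := hq.coe_nnreal_ennreal
  set I : ℝ≥0∞ := ∫⁻ x, (q x : ℝ≥0∞) ^ 2 / ((p x : ℝ≥0∞) + (q x : ℝ≥0∞)) ∂μ with hIdef
  set J : ℝ≥0∞ :=
    ∫⁻ x, (q x : ℝ≥0∞) * ((q x : ℝ≥0∞) / ((p x : ℝ≥0∞) + (q x : ℝ≥0∞))) ^ 2 ∂μ with hJdef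
  have m1 : Measurable fun x => (q x : ℝ≥0∞) ^ 2 / ((p x : ℝ≥0∞) + (q x : ℝ≥0∞)) :=
    (mq.pow_const 2).div (mp.add mq)
  -- pointwise key inequality in ℝ≥0∞
  have hpt : ∀ x, (q x : ℝ≥0∞) ≤
      (q x : ℝ≥0∞) ^ 2 / ((p x : ℝ≥0∞) + (q x : ℝ≥0∞))
        + ((p x : ℝ≥0∞) + (q x : ℝ≥0∞)) / 4 := by
    intro x
    rcases eq_or_ne (p x + q x) 0 with h | h
    · have hq0 : q x = 0 := (add_eq_zero.mp h).2
      simp [hq0]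
    · have key := ENNReal.coe_le_coe.mpr (nnreal_key (p x) (q x))
      rw [ENNReal.coe_add, ENNReal.coe_div h, ENNReal.coe_div (by norm_num : (4:ℝ≥0) ≠ 0)]
        at key
      push_cast at key
      exact key
  -- first integral bound : 1/2 ≤ I
  have hI : (1/2 : ℝ≥0∞) ≤ I := by
    have h1 : (1:ℝ≥0∞) ≤ I + 1/2 := by
      have hmono : (1:ℝ≥0∞) ≤ ∫⁻ x, ((q x : ℝ≥0∞) ^ 2 / ((p x : ℝ≥0∞) + (q x : ℝ≥0∞))
          + ((p x : ℝ≥0∞) + (q x : ℝ≥0∞)) / 4) ∂μ := by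
        rw [← hq1]; exact lintegral_mono hpt
      have hsum : ∫⁻ x, ((q x : ℝ≥0∞) ^ 2 / ((p x : ℝ≥0∞) + (q x : ℝ≥0∞))
          + ((p x : ℝ≥0∞) + (q x : ℝ≥0∞)) / 4) ∂μ = I + 1/2 := by
        rw [lintegral_add_left m1]
        congr 1
        simp_rw [div_eq_mul_inv]
        rw [lintegral_mul_const _ (f := fun a => (p a : ℝ≥0∞) + (q a : ℝ≥0∞)) (mp.add mq), lintegral_add_left mp, hp1, hq1]
        have h24 : (1+1:ℝ≥0∞)*(4:ℝ≥0∞)⁻¹ = 1/2 := by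
          rw [one_add_one_eq_two, one_div,
            show (4:ℝ≥0∞) = 2*2 by norm_num, ENNReal.mul_inv (by norm_num) (by norm_num),
            ← mul_assoc, ENNReal.mul_inv_cancel (by norm_num) (by norm_num), one_mul]
        exact h24
      rwa [hsum] at hmono
    have h2 : (1/2:ℝ≥0∞) + 1/2 ≤ I + 1/2 := by rw [ENNReal.add_halves]; exact h1
    exact (ENNReal.add_le_add_iff_right (by norm_num : (1/2:ℝ≥0∞) ≠ ⊤)).mp h2
  -- Cauchy–Schwarz (Hölder with p = q = 2)
  have hIJ : I ≤ J ^ (1/2:ℝ) := by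
    have hconj : (2:ℝ).HolderConjugate 2 := ⟨by norm_num, by norm_num, by norm_num⟩
    have hf : AEMeasurable (fun x => (q x : ℝ≥0∞) ^ (1/2:ℝ)) μ :=
      (mq.pow_const _).aemeasurable
    have hg : AEMeasurable (fun x => (q x : ℝ≥0∞) ^ (1/2:ℝ) *
        ((q x : ℝ≥0∞) / ((p x : ℝ≥0∞) + (q x : ℝ≥0∞)))) μ :=
      ((mq.pow_const _).mul (mq.div (mp.add mq))).aemeasurable
    have hold := ENNReal.lintegral_mul_le_Lp_mul_Lq μ hconj hf hg
    have e1 : ∫⁻ a, ((fun x => (q x : ℝ≥0∞) ^ (1/2:ℝ)) * fun x =>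
        (q x : ℝ≥0∞) ^ (1/2:ℝ) * ((q x : ℝ≥0∞) / ((p x : ℝ≥0∞) + (q x : ℝ≥0∞)))) a ∂μ
        = I := by
      rw [hIdef]
      refine lintegral_congr fun x => ?_
      show (q x : ℝ≥0∞) ^ (1/2:ℝ) * ((q x : ℝ≥0∞) ^ (1/2:ℝ) * _) = _
      rw [← mul_assoc, half_mul_half, ← mul_div_assoc, ← sq]
    have e2 : ∫⁻ a, ((q a : ℝ≥0∞) ^ (1/2:ℝ)) ^ (2:ℝ) ∂μ = 1 := by
      rw [← hq1]
      refine lintegral_congr fun x => ?_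
      rw [← ENNReal.rpow_mul]; norm_num
    have e3 : ∫⁻ a, ((q a : ℝ≥0∞) ^ (1/2:ℝ) *
        ((q a : ℝ≥0∞) / ((p a : ℝ≥0∞) + (q a : ℝ≥0∞)))) ^ (2:ℝ) ∂μ = J := by
      rw [hJdef]
      refine lintegral_congr fun x => ?_
      rw [ENNReal.mul_rpow_of_nonneg _ _ (by norm_num), ← ENNReal.rpow_mul]
      norm_num [ENNReal.rpow_two]
    rw [e1, e2, e3, ENNReal.one_rpow, one_mul] at hold
    exact hold
  constructor
  · calc (1/4:ℝ≥0∞) = (1/2)^2 := by rw [one_div, one_div, ← ENNReal.inv_pow]; norm_num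
    _ ≤ I ^ 2 := pow_le_pow_left₀ (by positivity) hI 2
  · calc (1/4:ℝ≥0∞) = (1/2)^2 := by rw [one_div, one_div, ← ENNReal.inv_pow]; norm_num
    _ ≤ (J ^ (1/2:ℝ)) ^ 2 := pow_le_pow_left₀ (by positivity) (hI.trans hIJ) 2
    _ = J := by rw [sq, half_mul_half]
end
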